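/- Let h and m be positive integers, let G be an additive abelian group, and let A be a finite subset of G with |A| = m such that the h-fold sumset hA satisfies |hA| = C(m+h−1, h). Then the sum of all elements of hA equals C(m+h−1, h−1) times the sum of all elements of A, i.e., ∑_{a ∈ hA} a = C(m+h−1, h−1) • (∑_{a ∈ A} a). -/
import Mathlib


open Finset Pointwise

/-- The `h`-fold sumset `hA`: the set of all sums of `h` elements of `A`
(repetitions allowed). -/
def foldSumset {G : Type*} [AddCommMonoid G] [DecidableEq G] : ℕ → Finset G → Finset G
  | 0, _ => {0}
  | n + 1, A => A + foldSumset n A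

/-- The restricted `h`-fold sumset `h^∧A`: the set of all sums of `h` pairwise
distinct elements of `A`, i.e. sums `∑ x ∈ S, x` over `S ⊆ A` with `|S| = h`. -/
def restrictedSumset {G : Type*} [AddCommMonoid G] [DecidableEq G] (h : ℕ) (A : Finset G) :
    Finset G :=
  (A.powersetCard h).image fun S => S.sum id

/-- The restricted `[0,h]`-fold sumset `[0,h]^∧A = ⋃_{s=0}^{h} s^∧A`. -/
def restrictedIntervalSumset {G : Type*} [AddCommMonoid G] [DecidableEq G] (h : ℕ)
    (A : Finset G) : Finset G :=
  (Finset.range (h + 1)).biUnion fun s => restrictedSumset s A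

lemma foldSumset_eq_image {G : Type*} [AddCommMonoid G] [DecidableEq G] (h : ℕ) (A : Finset G) :
    foldSumset h A = (A.sym h).image fun s : Sym G h => (s : Multiset G).sum := by
  induction h with
  | zero => simp [foldSumset]; rfl
  | succ n ih =>
    rw [foldSumset, ih]
    ext x
    simp only [Finset.mem_add, Finset.mem_image]
    constructor
    · rintro ⟨a, ha, y, ⟨s, hs, rfl⟩, rfl⟩
      refine ⟨a ::ₛ s, ?_, ?_⟩
      · rw [Finset.mem_sym_iff]
        intro b hb
        rcases Sym.mem_cons.1 hb with rfl | hb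
        · exact ha
        · exact Finset.mem_sym_iff.1 hs _ hb
      · rw [Sym.coe_cons, Multiset.sum_cons]
    · rintro ⟨s, hs, rfl⟩
      obtain ⟨a, t, rfl⟩ := Sym.exists_eq_cons_of_succ s
      refine ⟨a, Finset.mem_sym_iff.1 hs _ (Sym.mem_cons_self _ _), (t : Multiset G).sum,
        ⟨t, ?_, rfl⟩, by rw [Sym.coe_cons, Multiset.sum_cons]⟩
      rw [Finset.mem_sym_iff]
      exact fun b hb => Finset.mem_sym_iff.1 hs _ (Sym.mem_cons_of_mem hb)

lemma card_finset_sym {G : Type*} [DecidableEq G] (h : ℕ) (A : Finset G) :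
    (A.sym h).card = Nat.choose (A.card + h - 1) h := by
  classical
  have : (A.sym h).card = Fintype.card (Sym {x // x ∈ A} h) := by
    rw [Fintype.card]
    apply Finset.card_bij'
      (i := fun s hs => s.attach.map fun x =>
        (⟨x.1, Finset.mem_sym_iff.1 hs _ x.2⟩ : {x // x ∈ A}))
      (j := fun (s : Sym {x // x ∈ A} h) _ => s.map Subtype.val)
    · intro s _; exact Finset.mem_univ _
    · intro s hs
      simp only [Sym.map_map, Function.comp_def]
      exact Sym.attach_map_coe _
    · intro s _
      apply Sym.map_injective Subtype.val_injective
      simp only [Sym.map_map, Function.comp_def]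
      exact Sym.attach_map_coe _
    · intro s _
      rw [Finset.mem_sym_iff]
      intro a ha
      rw [Sym.mem_map] at ha
      obtain ⟨b, _, rfl⟩ := ha
      exact b.2
  rw [this, Sym.card_sym_eq_choose, Fintype.card_coe]

theorem fold_sumset_sum_eq {G : Type*} [AddCommGroup G] [DecidableEq G]
    (h m : ℕ) (hh : 0 < h) (hm : 0 < m) (A : Finset G) (hA : A.card = m)
    (hmax : (foldSumset h A).card = Nat.choose (m + h - 1) h) :
    ∑ a ∈ foldSumset h A, a = Nat.choose (m + h - 1) (h - 1) • (∑ a ∈ A, a) := by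
  classical
  have hsymcard : (A.sym h).card = Nat.choose (m + h - 1) h := by
    rw [card_finset_sym, hA]
  rw [foldSumset_eq_image] at hmax ⊢
  have hinj : Set.InjOn (fun s : Sym G h => (s : Multiset G).sum) (A.sym h) :=
    Finset.injOn_of_card_image_eq (by rw [hmax, hsymcard])
  rw [Finset.sum_image fun x hx y hy => hinj hx hy]
  have hsum : ∀ s ∈ A.sym h,
      (s : Multiset G).sum = ∑ a ∈ A, (s : Multiset G).count a • a := by
    intro s hs
    have h1 : (s : Multiset G).sum
        = ∑ a ∈ (s : Multiset G).toFinset, (s : Multiset G).count a • a := by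
      conv_lhs => rw [← Multiset.map_id (s : Multiset G)]
      rw [Finset.sum_multiset_map_count]
      simp only [id]
    rw [h1]
    apply Finset.sum_subset
    · intro a ha
      exact Finset.mem_sym_iff.1 hs _ (Multiset.mem_toFinset.1 ha)
    · intro a _ ha
      rw [Multiset.count_eq_zero_of_notMem (by simpa using ha), zero_smul]
  rw [Finset.sum_congr rfl hsum, Finset.sum_comm]
  set c : G → ℕ := fun a => ∑ s ∈ A.sym h, (s : Multiset G).count a with hc
  have hmemswap : ∀ a ∈ A, ∀ b ∈ A, ∀ s ∈ A.sym h,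
      Sym.map (Equiv.swap a b) s ∈ A.sym h := by
    intro a ha b hb s hs
    rw [Finset.mem_sym_iff]
    intro x hx
    rw [Sym.mem_map] at hx
    obtain ⟨y, hy, rfl⟩ := hx
    rcases eq_or_ne y a with rfl | hya
    · rw [Equiv.swap_apply_left]; exact hb
    rcases eq_or_ne y b with rfl | hyb
    · rw [Equiv.swap_apply_right]; exact ha
    · rw [Equiv.swap_apply_of_ne_of_ne hya hyb]
      exact Finset.mem_sym_iff.1 hs _ hy
  have hconst : ∀ a ∈ A, ∀ b ∈ A, c a = c b := by
    intro a ha b hb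
    rw [hc]
    apply Finset.sum_nbij' (i := fun s => Sym.map (Equiv.swap a b) s)
      (j := fun s => Sym.map (Equiv.swap a b) s)
    · exact fun s hs => hmemswap a ha b hb s hs
    · exact fun s hs => hmemswap a ha b hb s hs
    · intro s _
      rw [Sym.map_map]
      simp [Function.comp_def, Equiv.swap_apply_self]
    · intro s _
      rw [Sym.map_map]
      simp [Function.comp_def, Equiv.swap_apply_self]
    · intro s _
      rw [Sym.coe_map]
      have := Multiset.count_map_eq_count' (⇑(Equiv.swap a b)) (s : Multiset G)
        (Equiv.swap a b).injective ((Equiv.swap a b) b)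
      simp only [Equiv.swap_apply_self, Equiv.swap_apply_right, Equiv.swap_apply_left] at this
      exact this.symm
  have htot : ∑ a ∈ A, c a = Nat.choose (m + h - 1) h * h := by
    rw [hc, Finset.sum_comm]
    rw [Finset.sum_congr rfl fun s hs => ?_]
    · rw [Finset.sum_const, smul_eq_mul, hsymcard]
    · calc ∑ x ∈ A, Multiset.count x (s : Multiset G)
          = Multiset.card (s : Multiset G) :=
            Multiset.sum_count_eq_card fun x hx => Finset.mem_sym_iff.1 hs _ hx
        _ = h := s.2
  obtain ⟨a₀, ha₀⟩ : A.Nonempty := Finset.card_pos.1 (hA ▸ hm)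
  have hkey : m * c a₀ = m * Nat.choose (m + h - 1) (h - 1) := by
    have h1 : ∑ a ∈ A, c a = m * c a₀ := by
      rw [Finset.sum_congr rfl fun b hb => hconst b hb a₀ ha₀, Finset.sum_const, smul_eq_mul, hA]
    have h2 : Nat.choose (m + h - 1) h * h = Nat.choose (m + h - 1) (h - 1) * m := by
      have := Nat.choose_succ_right_eq (m + h - 1) (h - 1)
      rwa [show h - 1 + 1 = h by omega, show m + h - 1 - (h - 1) = m by omega] at this
    rw [← h1, htot, h2, Nat.mul_comm]
  have hcval : c a₀ = Nat.choose (m + h - 1) (h - 1) := Nat.eq_of_mul_eq_mul_left hm hkey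
  calc ∑ a ∈ A, ∑ s ∈ A.sym h, (s : Multiset G).count a • a
      = ∑ a ∈ A, c a • a := by
        refine Finset.sum_congr rfl fun a ha => ?_
        rw [hc, ← Finset.sum_smul]
    _ = ∑ a ∈ A, Nat.choose (m + h - 1) (h - 1) • a := by
        refine Finset.sum_congr rfl fun a ha => ?_
        rw [hconst a ha a₀ ha₀, hcval]
    _ = Nat.choose (m + h - 1) (h - 1) • ∑ a ∈ A, a := (Finset.smul_sum).symm
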